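/- Let f^{(1)}, ..., f^{(T)} be convex functions on the probability simplex Δ_K with gradients bounded in Euclidean norm by G. Consider iterates α^{(1)} = (1/K,...,1/K) and α^{(t+1)} = Π_{Δ_K^{η_t}}(α^{(t)} − η_t ∇f^{(t)}(α^{(t)})), projecting onto the truncated simplex Δ_K^{η_t} = {α ∈ Δ_K : α_k ≥ η_t/K ∀k}, with step sizes η_t ∈ [0,1]. Then for every α ∈ Δ_K: Σ_{t=1}^T f^{(t)}(α^{(t)}) − Σ_{t=1}^T f^{(t)}(α) ≤ 1/η_T + ((G²+1)/2) Σ_{t=1}^T η_t. -/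

import Mathlib

open RealInnerProductSpace Topology

section Aux

variable {E : Type*} [NormedAddCommGroup E] [InnerProductSpace ℝ E]

/-- Gradient inequality for a convex function. -/
lemma my_grad_ineq [CompleteSpace E] {s : Set E} {f : E → ℝ} {g x y : E}
    (hf : ConvexOn ℝ s f) (hx : x ∈ s) (hy : y ∈ s) (hg : HasGradientAt f g x) :
    f x + ⟪g, y - x⟫ ≤ f y := by
  set d := y - x with hd
  have h1 : HasDerivAt (fun τ : ℝ => x + τ • d) d 0 := by
    simpa using ((hasDerivAt_id (0:ℝ)).smul_const d).const_add x
  have h0 : HasFDerivAt f ((InnerProductSpace.toDual ℝ E) g) (x + (0:ℝ) • d) := by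
    simpa using hg.hasFDerivAt
  have hline : HasDerivAt (fun τ : ℝ => f (x + τ • d)) ⟪g, d⟫ 0 := by
    refine (h0.comp_hasDerivAt 0 h1).congr_deriv ?_
    simp
  have hslope : Filter.Tendsto (slope (fun τ : ℝ => f (x + τ • d)) 0) (𝓝[>] 0)
      (𝓝 ⟪g, d⟫) :=
    (hasDerivAt_iff_tendsto_slope.1 hline).mono_left
      (nhdsWithin_mono 0 (fun z hz => ne_of_gt hz))
  have hle : ∀ᶠ τ in 𝓝[>] (0:ℝ), slope (fun τ : ℝ => f (x + τ • d)) 0 τ ≤ f y - f x := by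
    filter_upwards [Ioc_mem_nhdsGT_of_mem (Set.left_mem_Ico.2 one_pos)] with τ hτ
    obtain ⟨hτ0, hτ1⟩ := hτ
    have hxy : x + τ • d = (1 - τ) • x + τ • y := by rw [hd]; module
    have hcvx : f (x + τ • d) ≤ (1 - τ) * f x + τ * f y := by
      rw [hxy]; exact hf.2 hx hy (by linarith) hτ0.le (by ring)
    rw [slope_def_field]
    simp only [sub_zero, zero_smul, add_zero]
    rw [div_le_iff₀ hτ0]
    nlinarith
  have := le_of_tendsto hslope hle
  linarith

/-- Variational inequality for metric projections onto convex sets. -/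
lemma my_vi {S : Set E} (hS : Convex ℝ S) {p y : E} (hp : p ∈ S)
    (hmin : ∀ z ∈ S, ‖p - y‖ ≤ ‖z - y‖) : ∀ z ∈ S, ⟪y - p, z - p⟫ ≤ 0 := by
  haveI : Nonempty S := ⟨⟨p, hp⟩⟩
  have heq : ‖y - p‖ = ⨅ w : S, ‖y - w‖ := by
    apply le_antisymm
    · exact le_ciInf fun w => by
        rw [norm_sub_rev y p, norm_sub_rev y (w : E)]; exact hmin w w.2
    · have hbdd : BddBelow (Set.range fun w : S => ‖y - (w:E)‖) :=
        ⟨0, by rintro _ ⟨w, rfl⟩; exact norm_nonneg _⟩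
      exact ciInf_le hbdd ⟨p, hp⟩
  exact fun z hz => (norm_eq_iInf_iff_real_inner_le_zero hS hp).1 heq z hz

/-- Basic algebraic expansion for a gradient step. -/
lemma my_expand (x x' b g : E) (η : ℝ) :
    2*η*⟪g, x - b⟫ = ‖x - b‖^2 - ‖x' - b‖^2 + η^2*‖g‖^2 - ‖(x - η•g) - x'‖^2
      - 2*⟪(x - η•g) - x', x' - b⟫ := by
  set y := x - η•g with hy
  set ρ := y - x' with hρ
  have h1 : ‖x' - b‖^2 = ‖y - b‖^2 - 2*⟪y - b, ρ⟫ + ‖ρ‖^2 := by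
    have e : x' - b = (y - b) - ρ := by rw [hρ]; abel
    rw [e, norm_sub_sq_real]
  have h2 : ⟪y - b, ρ⟫ = ‖ρ‖^2 + ⟪ρ, x' - b⟫ := by
    have e : y - b = ρ + (x' - b) := by rw [hρ]; abel
    rw [e, inner_add_left, real_inner_self_eq_norm_sq, real_inner_comm]
  have h3 : ‖y - b‖^2 = ‖x - b‖^2 - 2*η*⟪g, x - b⟫ + η^2*‖g‖^2 := by
    have e : y - b = (x - b) - η•g := by rw [hy]; abel
    rw [e, norm_sub_sq_real, real_inner_smul_right, norm_smul, Real.norm_eq_abs,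
      mul_pow, sq_abs, real_inner_comm]
    ring
  linarith

end Aux

/-- The probability simplex in `EuclideanSpace ℝ (Fin K)`. -/
def simplexSet (K : ℕ) : Set (EuclideanSpace ℝ (Fin K)) :=
  {a | (∀ k, 0 ≤ a k) ∧ ∑ k, a k = 1}

/-- The truncated probability simplex `Δ_K^β = {α ∈ Δ_K : α_k ≥ β/K}`. -/
def truncSimplex (K : ℕ) (β : ℝ) : Set (EuclideanSpace ℝ (Fin K)) :=
  {a | (∀ k, β / K ≤ a k) ∧ ∑ k, a k = 1}

section SimplexFacts

variable {K : ℕ}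

lemma my_inner_eq (x y : EuclideanSpace ℝ (Fin K)) : ⟪x, y⟫ = ∑ k, x k * y k := by
  simp [PiLp.inner_apply, RCLike.inner_apply, conj_trivial]
  exact Finset.sum_congr rfl (fun _ _ => mul_comm _ _)

lemma my_coord_le_one {a : EuclideanSpace ℝ (Fin K)} (ha : a ∈ simplexSet K) (k : Fin K) :
    a k ≤ 1 := by
  have := Finset.single_le_sum (f := fun i => a i) (fun i _ => ha.1 i) (Finset.mem_univ k)
  rw [ha.2] at this
  exact this

lemma my_normsq_le_one {a : EuclideanSpace ℝ (Fin K)} (ha : a ∈ simplexSet K) :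
    ‖a‖^2 ≤ 1 := by
  rw [← real_inner_self_eq_norm_sq, my_inner_eq]
  calc ∑ k, a k * a k ≤ ∑ k, a k := by
        refine Finset.sum_le_sum fun k _ => ?_
        nlinarith [ha.1 k, my_coord_le_one ha k]
    _ = 1 := ha.2

lemma my_inner_nonneg {a b : EuclideanSpace ℝ (Fin K)} (ha : a ∈ simplexSet K)
    (hb : b ∈ simplexSet K) : 0 ≤ ⟪a, b⟫ := by
  rw [my_inner_eq]
  exact Finset.sum_nonneg fun k _ => mul_nonneg (ha.1 k) (hb.1 k)

lemma my_distsq_le_two {a b : EuclideanSpace ℝ (Fin K)} (ha : a ∈ simplexSet K)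
    (hb : b ∈ simplexSet K) : ‖a - b‖^2 ≤ 2 := by
  rw [norm_sub_sq_real]
  have := my_normsq_le_one ha
  have := my_normsq_le_one hb
  have := my_inner_nonneg ha hb
  linarith

lemma my_trunc_convex (c : ℝ) : Convex ℝ (truncSimplex K c) := by
  intro x hx y hy a b ha hb hab
  constructor
  · intro k
    have h1 := hx.1 k
    have h2 := hy.1 k
    have e : (a • x + b • y) k = a * x k + b * y k := by
      simp [PiLp.smul_apply, PiLp.add_apply, smul_eq_mul]
    rw [e]
    have h3 := mul_le_mul_of_nonneg_left h1 ha
    have h4 := mul_le_mul_of_nonneg_left h2 hb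
    have h5 : a*(c/(K:ℝ)) + b*(c/(K:ℝ)) = c/(K:ℝ) := by rw [← add_mul, hab, one_mul]
    linarith
  · have e : ∀ k, (a • x + b • y) k = a * x k + b * y k := fun k => by
      simp [PiLp.smul_apply, PiLp.add_apply, smul_eq_mul]
    simp only [e]
    rw [Finset.sum_add_distrib, ← Finset.mul_sum, ← Finset.mul_sum, hx.2, hy.2]
    simpa using hab

end SimplexFacts

set_option maxHeartbeats 1000000 in
/-- Regret bound for online gradient descent with projections onto
gradually truncated simplices. -/
theorem stmt11 {K : ℕ} (hK : 1 ≤ K) (T : ℕ) (hT : 1 ≤ T)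
    (f : ℕ → EuclideanSpace ℝ (Fin K) → ℝ)
    (g : ℕ → EuclideanSpace ℝ (Fin K) → EuclideanSpace ℝ (Fin K))
    (G : ℝ) (η : ℕ → ℝ) (α : ℕ → EuclideanSpace ℝ (Fin K))
    (hconv : ∀ t, ConvexOn ℝ (simplexSet K) (f t))
    (hgrad : ∀ t, ∀ x ∈ simplexSet K, HasGradientAt (f t) (g t x) x)
    (hG : ∀ t, ∀ x ∈ simplexSet K, ‖g t x‖ ≤ G)
    (hη : ∀ t, η t ∈ Set.Icc (0:ℝ) 1) (hηanti : Antitone η)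
    (hηpos : ∀ t, 0 < η t)
    (hinit : ∀ k, α 1 k = 1 / (K : ℝ))
    (hmem : ∀ t, α (t + 1) ∈ truncSimplex K (η t))
    (hproj : ∀ t, ∀ y ∈ truncSimplex K (η t),
      ‖α (t + 1) - (α t - η t • g t (α t))‖ ≤ ‖y - (α t - η t • g t (α t))‖)
    (β : EuclideanSpace ℝ (Fin K)) (hβ : β ∈ simplexSet K) :
    ∑ t ∈ Finset.Icc 1 T, f t (α t) - ∑ t ∈ Finset.Icc 1 T, f t β ≤
      1 / η T + (G ^ 2 + 1) / 2 * ∑ t ∈ Finset.Icc 1 T, η t := by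
  have hK0 : (0:ℝ) < K := by exact_mod_cast hK
  have hKne : (K:ℝ) ≠ 0 := ne_of_gt hK0
  -- the uniform sum
  have hαsum1 : ∑ k, α 1 k = 1 := by
    simp only [hinit]
    rw [Finset.sum_const, Finset.card_univ, Fintype.card_fin, nsmul_eq_mul]
    field_simp
  have hα1S : α 1 ∈ simplexSet K := by
    refine ⟨fun k => ?_, hαsum1⟩
    rw [hinit k]; positivity
  -- truncated simplex is contained in the simplex
  have htruncsub : ∀ t, truncSimplex K (η t) ⊆ simplexSet K := by
    intro t a ha
    refine ⟨fun k => le_trans ?_ (ha.1 k), ha.2⟩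
    have := (hηpos t).le
    positivity
  have hαS : ∀ t, 1 ≤ t → α t ∈ simplexSet K := by
    intro t ht
    obtain ⟨s, rfl⟩ : ∃ s, t = s + 1 := ⟨t - 1, by omega⟩
    exact htruncsub s (hmem s)
  -- ‖α 1 - β‖² ≤ 1
  have hvb : ‖α 1 - β‖^2 ≤ 1 := by
    rw [norm_sub_sq_real]
    have h1 : ⟪α 1, β⟫ = 1/K := by
      rw [my_inner_eq]
      simp only [hinit]
      rw [← Finset.mul_sum, hβ.2, mul_one]
    have h2 : ‖α 1‖^2 = 1/K := by
      rw [← real_inner_self_eq_norm_sq, my_inner_eq]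
      simp only [hinit]
      rw [Finset.sum_const, Finset.card_univ, Fintype.card_fin, nsmul_eq_mul]
      field_simp
    have h3 := my_normsq_le_one hβ
    have h4 : 0 < 1/(K:ℝ) := by positivity
    rw [h1, h2]
    linarith
  have hG0 : 0 ≤ G := le_trans (norm_nonneg _) (hG 1 (α 1) hα1S)
  -- per-step inequality
  have key : ∀ t, 1 ≤ t → f t (α t) - f t β ≤
      (‖α t - β‖^2 - ‖α (t+1) - β‖^2)/(2*η t) + η t * ((G^2+1)/2) := by
    intro t ht
    set x := α t with hx
    set x' := α (t+1) with hx'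
    set gt := g t x with hgt
    set e := η t with he
    have hepos : 0 < e := hηpos t
    have he1 : e ≤ 1 := (hη t).2
    have hxS : x ∈ simplexSet K := hαS t ht
    -- gradient inequality
    have hgr := my_grad_ineq (hconv t) hxS hβ (hgrad t x hxS)
    have h1 : f t x - f t β ≤ ⟪gt, x - β⟫ := by
      have e1 : ⟪gt, β - x⟫ = -⟪gt, x - β⟫ := by
        rw [← inner_neg_right]
        congr 1
        abel
      rw [e1] at hgr
      linarith
    -- the shifted comparator
    set u : EuclideanSpace ℝ (Fin K) := (1-e) • β + e • α 1 with hu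
    have huS : u ∈ truncSimplex K e := by
      constructor
      · intro k
        have e1 : u k = (1-e) * β k + e * α 1 k := by
          rw [hu]; simp [PiLp.smul_apply, PiLp.add_apply, smul_eq_mul]
        rw [e1, hinit k]
        have hb1 := hβ.1 k
        have : e / K = e * (1/K) := by ring
        rw [this]
        nlinarith
      · have e1 : ∀ k, u k = (1-e) * β k + e * α 1 k := fun k => by
          rw [hu]; simp [PiLp.smul_apply, PiLp.add_apply, smul_eq_mul]
        simp only [e1]
        rw [Finset.sum_add_distrib, ← Finset.mul_sum, ← Finset.mul_sum, hβ.2, hαsum1]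
        ring
    -- variational inequality
    set y : EuclideanSpace ℝ (Fin K) := x - e • gt with hy
    set ρ : EuclideanSpace ℝ (Fin K) := y - x' with hρ
    have hvi : ⟪ρ, u - x'⟫ ≤ 0 := by
      refine my_vi (my_trunc_convex e) (hmem t) ?_ u huS
      intro z hz
      exact hproj t z hz
    -- expansion
    have hexp := my_expand x x' β gt e
    rw [← hy, ← hρ] at hexp
    -- split the cross term
    have hsplit : ⟪ρ, x' - β⟫ = -⟪ρ, u - x'⟫ + e * ⟪ρ, α 1 - β⟫ := by
      have e1 : x' - β = -(u - x') + e • (α 1 - β) := by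
        rw [hu]; module
      rw [e1, inner_add_right, inner_neg_right, real_inner_smul_right]
    -- Cauchy-Schwarz + Young
    have hcs : -(2 * e * ⟪ρ, α 1 - β⟫) ≤ ‖ρ‖^2 + e^2 * ‖α 1 - β‖^2 := by
      have h2 := abs_real_inner_le_norm ρ (α 1 - β)
      have h3 : -⟪ρ, α 1 - β⟫ ≤ ‖ρ‖ * ‖α 1 - β‖ := by
        have := neg_abs_le ⟪ρ, α 1 - β⟫
        linarith
      nlinarith [sq_nonneg (‖ρ‖ - e * ‖α 1 - β‖), norm_nonneg ρ, norm_nonneg (α 1 - β)]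
    have hgsq : ‖gt‖^2 ≤ G^2 := by
      have := hG t x hxS
      nlinarith [norm_nonneg gt]
    -- combine
    have hmain : 2*e*(f t x - f t β) ≤ (‖x - β‖^2 - ‖x' - β‖^2) + e^2*(G^2+1) := by
      have h5 : 2*e*(f t x - f t β) ≤ 2*e*⟪gt, x - β⟫ := by nlinarith
      rw [hsplit] at hexp
      nlinarith
    have h2e : (0:ℝ) < 2*e := by linarith
    have hrw : (‖x - β‖^2 - ‖x' - β‖^2)/(2*e) + e*((G^2+1)/2)
        = ((‖x - β‖^2 - ‖x' - β‖^2) + e^2*(G^2+1))/(2*e) := by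
      field_simp
    rw [hrw, le_div_iff₀ h2e]
    nlinarith
  -- telescoping bound
  have tele : ∀ N, 1 ≤ N →
      ∑ t ∈ Finset.Icc 1 N, (‖α t - β‖^2 - ‖α (t+1) - β‖^2)/(2*η t)
        ≤ 1/η N - ‖α (N+1) - β‖^2/(2*η N) := by
    intro N hN
    induction N with
    | zero => omega
    | succ n ih =>
      rcases Nat.lt_or_ge 1 (n+1) with h1 | h1
      · -- 1 ≤ n
        have hn1 : 1 ≤ n := by omega
        rw [Finset.sum_Icc_succ_top (by omega : 1 ≤ n+1)]
        have ihh := ih hn1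
        have ha : 0 < η n := hηpos n
        have hb : 0 < η (n+1) := hηpos (n+1)
        have hba : η (n+1) ≤ η n := hηanti (Nat.le_succ n)
        have hPle : ‖α (n+1) - β‖^2 ≤ 2 := my_distsq_le_two (hαS (n+1) (by omega)) hβ
        have hP0 : 0 ≤ ‖α (n+1) - β‖^2 := sq_nonneg _
        have hstep : 1/η n - ‖α (n+1) - β‖^2/(2*η n) + ‖α (n+1) - β‖^2/(2*η (n+1))
            ≤ 1/η (n+1) := by
          set P := ‖α (n+1) - β‖^2
          have hmono : 1/η n ≤ 1/η (n+1) := one_div_le_one_div_of_le hb hba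
          have hprod : 0 ≤ (1/η (n+1) - 1/η n) * (1 - P/2) :=
            mul_nonneg (by linarith) (by linarith)
          have e1 : (1/η (n+1) - 1/η n) * (1 - P/2)
              = (1/η (n+1) - 1/η n) - (P/(2*η (n+1)) - P/(2*η n)) := by
            field_simp
          rw [e1] at hprod
          linarith
        have hsub : (‖α (n+1) - β‖^2 - ‖α (n+1+1) - β‖^2)/(2*η (n+1))
            = ‖α (n+1) - β‖^2/(2*η (n+1)) - ‖α (n+1+1) - β‖^2/(2*η (n+1)) := by
          rw [sub_div]
        rw [hsub]
        linarith
      · -- n + 1 = 1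
        have hn : n = 0 := by omega
        subst hn
        rw [Finset.Icc_self, Finset.sum_singleton]
        have ha : 0 < η 1 := hηpos 1
        have hPle : ‖α 1 - β‖^2 ≤ 2 := my_distsq_le_two hα1S hβ
        have hsub : (‖α 1 - β‖^2 - ‖α 2 - β‖^2)/(2*η 1)
            = ‖α 1 - β‖^2/(2*η 1) - ‖α 2 - β‖^2/(2*η 1) := sub_div _ _ _
        have hfst : ‖α 1 - β‖^2/(2*η 1) ≤ 1/η 1 := by
          rw [div_le_div_iff₀ (by linarith) ha]
          nlinarith
        rw [hsub]
        have hfst' : ‖α 1 - β‖^2/(2*η 1) ≤ (η 1)⁻¹ := by rw [← one_div]; exact hfst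
        norm_num
        linarith
  -- assemble
  rw [← Finset.sum_sub_distrib]
  have hsum1 : ∑ t ∈ Finset.Icc 1 T, (f t (α t) - f t β)
      ≤ ∑ t ∈ Finset.Icc 1 T, ((‖α t - β‖^2 - ‖α (t+1) - β‖^2)/(2*η t) + η t * ((G^2+1)/2)) := by
    refine Finset.sum_le_sum fun t htmem => ?_
    exact key t (Finset.mem_Icc.mp htmem).1
  rw [Finset.sum_add_distrib] at hsum1
  have hsum2 : ∑ t ∈ Finset.Icc 1 T, η t * ((G^2+1)/2)
      = (G^2+1)/2 * ∑ t ∈ Finset.Icc 1 T, η t := by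
    rw [Finset.mul_sum]
    exact Finset.sum_congr rfl fun t _ => mul_comm _ _
  have htele := tele T hT
  have hPf : 0 ≤ ‖α (T+1) - β‖^2/(2*η T) := by
    have := (hηpos T).le
    positivity
  rw [hsum2] at hsum1
  linarith
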